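/- For any simple graph G on a finite vertex set with at least 6 vertices, ai(G) is finite; that is, there exists an asymmetric simple graph on the same vertex set as G. -/

import Mathlib

/-- A simple graph is *asymmetric* if its only automorphism is the identity. -/
def SimpleGraph.IsAsymmetric {V : Type*} (G : SimpleGraph V) : Prop :=
  ∀ f : G ≃g G, ∀ v : V, f v = v

/-- The *asymmetric index* `ai(G)`: the minimum, over all asymmetric graphs `G'` on the
same vertex set, of the number of edges in which `G` and `G'` differ (edges removed plus
edges added); `⊤` (infinity) if no asymmetric graph on the vertex set exists. -/
noncomputable def SimpleGraph.asymIndex {V : Type*} (G : SimpleGraph V) : ℕ∞ :=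
  sInf {n : ℕ∞ | ∃ G' : SimpleGraph V, G'.IsAsymmetric ∧
    n = (symmDiff G.edgeSet G'.edgeSet).encard}

/-- The adjacency relation of the "path plus chord {1,3}" graph, on labels. -/
private def RRaux (a b : ℕ) : Prop :=
  b = a + 1 ∨ a = b + 1 ∨ (a = 1 ∧ b = 3) ∨ (a = 3 ∧ b = 1)

private lemma RRaux_symm {a b : ℕ} (h : RRaux a b) : RRaux b a := by
  unfold RRaux at *; omega

private lemma RRaux_irrefl (a : ℕ) : ¬ RRaux a a := by
  unfold RRaux; omega

private lemma RRaux_triangle {x y z : ℕ} (h1 : RRaux x y) (h2 : RRaux x z)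
    (h3 : RRaux y z) : x = 1 ∨ x = 2 ∨ x = 3 := by
  unfold RRaux at *; omega

/-- The graph on `V` induced by a labeling `c` via `RRaux`. -/
private def AGaux {V : Type*} (c : V → ℕ) : SimpleGraph V where
  Adj u v := RRaux (c u) (c v)
  symm := ⟨fun _ _ h => RRaux_symm h⟩
  loopless := ⟨fun _ h => RRaux_irrefl _ h⟩

private lemma AGaux_asym {V : Type*} (c : V → ℕ) (hc : Function.Injective c)
    {n : ℕ} (hn : 6 ≤ n) (hlt : ∀ v, c v < n) (hsurj : ∀ k, k < n → ∃ v, c v = k) :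
    (AGaux c).IsAsymmetric := by
  intro f v
  set d : V → ℕ := fun x => c (f x) with hd
  have key : ∀ u w : V, RRaux (d u) (d w) ↔ RRaux (c u) (c w) := fun u w => f.map_adj_iff
  have hdinj : Function.Injective d := fun a b h => f.injective (hc h)
  have hdlt : ∀ x, d x < n := fun x => hlt _
  have hdsurj : ∀ k, k < n → ∃ x, d x = k := by
    intro k hk
    obtain ⟨u, hu⟩ := hsurj k hk
    refine ⟨f.symm u, ?_⟩
    show c (f (f.symm u)) = k
    rw [f.apply_symm_apply, hu]
  -- triangle membership characterizations
  have tri_of : ∀ (g : V → ℕ), (∀ k, k < n → ∃ x, g x = k) →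
      ∀ x, (g x = 1 ∨ g x = 2 ∨ g x = 3) →
      ∃ a b, RRaux (g x) (g a) ∧ RRaux (g x) (g b) ∧ RRaux (g a) (g b) := by
    intro g hg x hx
    obtain ⟨a1, ha1⟩ := hg 1 (by omega)
    obtain ⟨a2, ha2⟩ := hg 2 (by omega)
    obtain ⟨a3, ha3⟩ := hg 3 (by omega)
    rcases hx with h | h | h
    · exact ⟨a2, a3, by unfold RRaux; omega, by unfold RRaux; omega, by unfold RRaux; omega⟩
    · exact ⟨a1, a3, by unfold RRaux; omega, by unfold RRaux; omega, by unfold RRaux; omega⟩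
    · exact ⟨a1, a2, by unfold RRaux; omega, by unfold RRaux; omega, by unfold RRaux; omega⟩
  have tri_iff : ∀ x, (∃ a b, RRaux (d x) (d a) ∧ RRaux (d x) (d b) ∧ RRaux (d a) (d b)) ↔
      (∃ a b, RRaux (c x) (c a) ∧ RRaux (c x) (c b) ∧ RRaux (c a) (c b)) := by
    intro x
    constructor
    · rintro ⟨a, b, h1, h2, h3⟩
      exact ⟨a, b, (key x a).1 h1, (key x b).1 h2, (key a b).1 h3⟩
    · rintro ⟨a, b, h1, h2, h3⟩
      exact ⟨a, b, (key x a).2 h1, (key x b).2 h2, (key a b).2 h3⟩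
  -- main claim: d agrees with c everywhere
  have main : ∀ k, ∀ x, c x = k → d x = k := by
    intro k
    induction k using Nat.strong_induction_on with
    | _ k IH =>
      rcases k with _ | _ | _ | _ | m
      · -- k = 0
        intro x hx
        obtain ⟨u1, hu1⟩ := hsurj 1 (by omega)
        have hPd : ∃! u, RRaux (d x) (d u) := by
          have hPc : ∃! u, RRaux (c x) (c u) := by
            refine ⟨u1, by unfold RRaux; omega, fun y hy => ?_⟩
            have : c y = 1 := by unfold RRaux at hy; omega
            exact hc (this.trans hu1.symm)
          obtain ⟨u, hu, hun⟩ := hPc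
          exact ⟨u, (key x u).2 hu, fun y hy => hun y ((key x y).1 hy)⟩
        have hcase : d x = 0 ∨ d x = n - 1 := by
          by_contra hcon
          push_neg at hcon
          obtain ⟨a, ha⟩ := hdsurj (d x - 1) (by have := hdlt x; omega)
          obtain ⟨b, hb⟩ := hdsurj (d x + 1) (by have := hdlt x; omega)
          obtain ⟨u, hu, hun⟩ := hPd
          have ea := hun a (by unfold RRaux; omega)
          have eb := hun b (by unfold RRaux; omega)
          have : d a = d b := by rw [ea, eb]
          omega
        rcases hcase with h0 | hlast
        · exact h0
        · exfalso
          have hT : d u1 = 1 ∨ d u1 = 2 ∨ d u1 = 3 := by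
            obtain ⟨a, b, h1, h2, h3⟩ := (tri_iff u1).2 (tri_of c hsurj u1 (Or.inl hu1))
            exact RRaux_triangle h1 h2 h3
          have hadj : RRaux (d x) (d u1) := (key x u1).2 (by unfold RRaux; omega)
          rw [hlast] at hadj
          unfold RRaux at hadj
          have := hdlt u1
          omega
      · -- k = 1
        intro x hx
        obtain ⟨u0, hu0⟩ := hsurj 0 (by omega)
        have hd0 : d u0 = 0 := IH 0 (by omega) u0 hu0
        have hadj : RRaux (d u0) (d x) := (key u0 x).2 (by unfold RRaux; omega)
        rw [hd0] at hadj
        unfold RRaux at hadj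
        omega
      · -- k = 2
        intro x hx
        obtain ⟨u1, hu1⟩ := hsurj 1 (by omega)
        have hd1 : d u1 = 1 := IH 1 (by omega) u1 hu1
        have hT : d x = 1 ∨ d x = 2 ∨ d x = 3 := by
          obtain ⟨a, b, h1, h2, h3⟩ :=
            (tri_iff x).2 (tri_of c hsurj x (Or.inr (Or.inl hx)))
          exact RRaux_triangle h1 h2 h3
        have hne1 : d x ≠ 1 := by
          intro h
          have hxu : x = u1 := hdinj (h.trans hd1.symm)
          rw [hxu] at hx
          omega
        have hnS : ¬ ∃ u, RRaux (d x) (d u) ∧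
            ¬∃ a b, RRaux (d u) (d a) ∧ RRaux (d u) (d b) ∧ RRaux (d a) (d b) := by
          rintro ⟨u, hru, hnt⟩
          have hru' : RRaux (c x) (c u) := (key x u).1 hru
          have hcu : c u = 1 ∨ c u = 3 := by unfold RRaux at hru'; omega
          rcases hcu with h | h
          · exact hnt ((tri_iff u).2 (tri_of c hsurj u (Or.inl h)))
          · exact hnt ((tri_iff u).2 (tri_of c hsurj u (Or.inr (Or.inr h))))
        have hne3 : d x ≠ 3 := by
          intro h3
          obtain ⟨u4, hu4⟩ := hdsurj 4 (by omega)
          refine hnS ⟨u4, by unfold RRaux; omega, ?_⟩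
          rintro ⟨a, b, h1, h2, h3'⟩
          have := RRaux_triangle h1 h2 h3'
          omega
        omega
      · -- k = 3
        intro x hx
        obtain ⟨u1, hu1⟩ := hsurj 1 (by omega)
        have hd1 : d u1 = 1 := IH 1 (by omega) u1 hu1
        obtain ⟨u2, hu2⟩ := hsurj 2 (by omega)
        have hd2 : d u2 = 2 := IH 2 (by omega) u2 hu2
        have hT : d x = 1 ∨ d x = 2 ∨ d x = 3 := by
          obtain ⟨a, b, h1, h2, h3⟩ :=
            (tri_iff x).2 (tri_of c hsurj x (Or.inr (Or.inr hx)))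
          exact RRaux_triangle h1 h2 h3
        have hne1 : d x ≠ 1 := by
          intro h
          have hxu : x = u1 := hdinj (h.trans hd1.symm)
          rw [hxu] at hx
          omega
        have hne2 : d x ≠ 2 := by
          intro h
          have hxu : x = u2 := hdinj (h.trans hd2.symm)
          rw [hxu] at hx
          omega
        omega
      · -- k = m + 4
        intro x hx
        have hkn : m + 4 < n := by have := hlt x; omega
        obtain ⟨u3, hu3⟩ := hsurj (m + 3) (by omega)
        have hd3 : d u3 = m + 3 := IH (m + 3) (by omega) u3 hu3
        obtain ⟨u2, hu2⟩ := hsurj (m + 2) (by omega)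
        have hd2 : d u2 = m + 2 := IH (m + 2) (by omega) u2 hu2
        obtain ⟨u1, hu1⟩ := hsurj 1 (by omega)
        have hd1 : d u1 = 1 := IH 1 (by omega) u1 hu1
        have hadj : RRaux (d u3) (d x) := (key u3 x).2 (by unfold RRaux; omega)
        have hne2 : d x ≠ m + 2 := by
          intro h
          have hxu : x = u2 := hdinj (h.trans hd2.symm)
          rw [hxu] at hx
          omega
        have hne1 : d x ≠ 1 := by
          intro h
          have hxu : x = u1 := hdinj (h.trans hd1.symm)
          rw [hxu] at hx
          omega
        rw [hd3] at hadj
        unfold RRaux at hadj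
        have := hdlt x
        omega
  exact hc (main (c v) v rfl)

/-- Every graph on at least six vertices has finite asymmetric index; equivalently there
is an asymmetric graph on its vertex set. -/
theorem asymIndex_ne_top {V : Type*} [Fintype V] (hV : 6 ≤ Fintype.card V)
    (G : SimpleGraph V) :
    G.asymIndex ≠ ⊤ ∧ ∃ G' : SimpleGraph V, G'.IsAsymmetric := by
  classical
  obtain ⟨G', hG'⟩ : ∃ G' : SimpleGraph V, G'.IsAsymmetric := by
    let e := Fintype.equivFin V
    refine ⟨AGaux (fun v => (e v).val), AGaux_asym _ ?_ hV ?_ ?_⟩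
    · intro u w h
      exact e.injective (Fin.val_injective h)
    · intro v
      exact (e v).isLt
    · intro k hk
      exact ⟨e.symm ⟨k, hk⟩, by simp⟩
  refine ⟨?_, G', hG'⟩
  have hmem : (symmDiff G.edgeSet G'.edgeSet).encard ∈
      {n : ℕ∞ | ∃ G'' : SimpleGraph V, G''.IsAsymmetric ∧
        n = (symmDiff G.edgeSet G''.edgeSet).encard} := ⟨G', hG', rfl⟩
  have hle : G.asymIndex ≤ (symmDiff G.edgeSet G'.edgeSet).encard := sInf_le hmem
  have hfin : (symmDiff G.edgeSet G'.edgeSet).encard ≠ ⊤ :=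
    (Set.toFinite _).encard_lt_top.ne
  intro h
  exact hfin (top_le_iff.1 (h ▸ hle))
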